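/- The generating function identity for modified Bessel functions: for every x ≠ 0 and t ∈ ℝ, e^{t(x + x^{-1})/2} = Σ_{n ∈ ℤ} x^n · I_n(t), where the series converges absolutely. -/

import Mathlib

/-- The modified Bessel function of the first kind of integer order:
`I_n(t) = Σ_{m=0}^∞ (t/2)^{2m+|n|} / (m! (m+|n|)!)`, with `I_{-n} = I_n`. -/
noncomputable def besselI (n : ℤ) (t : ℝ) : ℝ :=
  ∑' m : ℕ, (t / 2) ^ (2 * m + n.natAbs) / (m.factorial * (m + n.natAbs).factorial)

private def besselEquiv : ℤ × ℕ ≃ ℕ × ℕ where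
  toFun p := (p.2 + p.1.toNat, p.2 + (-p.1).toNat)
  invFun q := ((q.1 : ℤ) - q.2, min q.1 q.2)
  left_inv := by rintro ⟨n, m⟩; simp only [Prod.mk.injEq]; constructor <;> omega
  right_inv := by rintro ⟨j, k⟩; simp only [Prod.mk.injEq]; constructor <;> omega

private lemma bessel_key (x t : ℝ) (hx : x ≠ 0) (n : ℤ) (m : ℕ) :
    (t * x / 2) ^ (m + n.toNat) / (m + n.toNat).factorial *
      ((t / (2 * x)) ^ (m + (-n).toNat) / (m + (-n).toNat).factorial)
    = x ^ n * ((t / 2) ^ (2 * m + n.natAbs) / (m.factorial * (m + n.natAbs).factorial)) := by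
  rcases le_or_gt 0 n with h | h
  · obtain ⟨a, rfl⟩ := Int.eq_ofNat_of_zero_le h
    simp only [Int.toNat_natCast, Int.natAbs_natCast,
      Int.toNat_of_nonpos (by omega : -((a:ℕ):ℤ) ≤ 0), add_zero, zpow_natCast]
    rw [show 2 * m + a = (m + a) + m by ring, pow_add]
    field_simp
    ring_nf
    have hxm : x ^ m * x⁻¹ ^ m = 1 := by rw [inv_pow, mul_inv_cancel₀ (pow_ne_zero _ hx)]
    linear_combination (t ^ (m * 2) * t ^ a * x ^ a * (1 / 2) ^ (m * 2) * (1 / 2) ^ a) * hxm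
  · obtain ⟨a, ha, rfl⟩ : ∃ a : ℕ, 0 < a ∧ n = -(a:ℤ) := ⟨n.natAbs, by omega, by omega⟩
    simp only [Int.toNat_of_nonpos (by omega : -((a:ℕ):ℤ) ≤ 0), neg_neg, Int.toNat_natCast,
      Int.natAbs_neg, Int.natAbs_natCast, add_zero, zpow_neg, zpow_natCast]
    rw [show 2 * m + a = m + (m + a) by ring, pow_add]
    field_simp
    ring_nf
    have hxm : x ^ m * x⁻¹ ^ m = 1 := by rw [inv_pow, mul_inv_cancel₀ (pow_ne_zero _ hx)]
    have hxa : x ^ a * x⁻¹ ^ a = 1 := by rw [inv_pow, mul_inv_cancel₀ (pow_ne_zero _ hx)]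
    linear_combination (t ^ (m * 2) * t ^ a * (1 / 2) ^ (m * 2) * (1 / 2) ^ a) * (x ^ a * x⁻¹ ^ a) * hxm + (t ^ (m * 2) * t ^ a * (1 / 2) ^ (m * 2) * (1 / 2) ^ a) * hxa

theorem besselI_generating_function (x t : ℝ) (hx : x ≠ 0) :
    Summable (fun n : ℤ => |x ^ n * besselI n t|) ∧
    Real.exp (t * (x + x⁻¹) / 2) = ∑' n : ℤ, x ^ n * besselI n t := by
  set u : ℕ → ℝ := fun j => (t * x / 2) ^ j / j.factorial with hu_def
  set v : ℕ → ℝ := fun k => (t / (2 * x)) ^ k / k.factorial with hv_def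
  have hu : Summable fun j => ‖u j‖ := by
    have := Real.summable_pow_div_factorial |t * x / 2|
    refine this.congr fun j => ?_
    simp [hu_def, abs_pow, abs_div, abs_mul, Nat.abs_cast]
  have hv : Summable fun k => ‖v k‖ := by
    have := Real.summable_pow_div_factorial |t / (2 * x)|
    refine this.congr fun k => ?_
    simp [hv_def, abs_pow, abs_div, abs_mul, Nat.abs_cast]
  set f : ℕ × ℕ → ℝ := fun p => u p.1 * v p.2 with hf_def
  have hfn : Summable fun p => ‖f p‖ := hu.mul_norm hv
  have hf : Summable f := summable_mul_of_summable_norm hu hv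
  have hgn : Summable fun q : ℤ × ℕ => ‖f (besselEquiv q)‖ :=
    (besselEquiv.summable_iff (f := fun p => ‖f p‖)).mpr hfn
  have hg : Summable fun q : ℤ × ℕ => f (besselEquiv q) :=
    (besselEquiv.summable_iff (f := f)).mpr hf
  have hkey : ∀ (n : ℤ) (m : ℕ), f (besselEquiv (n, m)) =
      x ^ n * ((t / 2) ^ (2 * m + n.natAbs) / (m.factorial * (m + n.natAbs).factorial)) :=
    fun n m => bessel_key x t hx n m
  have hinner : ∀ n : ℤ, (∑' m : ℕ, f (besselEquiv (n, m))) = x ^ n * besselI n t := by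
    intro n
    rw [besselI, ← tsum_mul_left]
    exact tsum_congr fun m => hkey n m
  constructor
  · have hGsum : Summable fun n : ℤ => ∑' m : ℕ, ‖f (besselEquiv (n, m))‖ :=
      ((summable_prod_of_nonneg (fun q => norm_nonneg _)).mp hgn).2
    refine hGsum.of_nonneg_of_le (fun n => abs_nonneg _) fun n => ?_
    rw [← hinner n]
    exact norm_tsum_le_tsum_norm (hgn.prod_factor n)
  · have h1 : Real.exp (t * (x + x⁻¹) / 2) = Real.exp (t * x / 2 + t / (2 * x)) := by
      congr 1
      field_simp
    have h2 : Real.exp (t * x / 2) = ∑' j, u j := by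
      rw [Real.exp_eq_exp_ℝ, NormedSpace.exp_eq_tsum_div]
    have h3 : Real.exp (t / (2 * x)) = ∑' k, v k := by
      rw [Real.exp_eq_exp_ℝ, NormedSpace.exp_eq_tsum_div]
    rw [h1, Real.exp_add, h2, h3]
    have h4 : (∑' j, u j) * ∑' k, v k = ∑' p : ℕ × ℕ, f p := by
      rw [Summable.tsum_prod hf]
      conv_rhs => rw [tsum_congr (fun b : ℕ => tsum_mul_left (a := u b) (f := v))]
      rw [tsum_mul_right]
    rw [h4, ← besselEquiv.tsum_eq f, Summable.tsum_prod hg]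
    exact tsum_congr hinner
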